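/- If V is a simple H-module and W is a simple 𝕜G-module, then V ⊗ W, with the H#𝕜G-module structure (h#g^k)·(x ⊗ w) = (h v^k · x) ⊗ (g^k · w), is a simple H#𝕜G-module. -/

import Mathlib

open TensorProduct DirectSum

noncomputable section

/-- The character of a module `V` over a `k`-algebra `H`: the trace of the action of `h`. -/
def charLin (k H V : Type*) [CommRing k] [Ring H] [Algebra k H]
    [AddCommGroup V] [Module k V] [Module H V] [IsScalarTower k H V] [SMulCommClass H k V] :
    H →ₗ[k] k :=
  LinearMap.trace k V ∘ₗ (Algebra.lsmul k k V (A := H)).toLinearMap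

/-- Convolution product on the dual of a coalgebra. -/
def convP (k A : Type*) [CommRing k] [AddCommGroup A] [Module k A] [Coalgebra k A]
    (f g : A →ₗ[k] k) : A →ₗ[k] k :=
  LinearMap.mul' k k ∘ₗ TensorProduct.map f g ∘ₗ Coalgebra.comul

/-- The element `u = S(Λ₂)Λ₁` associated to an element `Λ` of a Hopf algebra. -/
def uElt (k H : Type*) [CommRing k] [Ring H] [HopfAlgebra k H] (Λ : H) : H :=
  LinearMap.mul' k H
    ((TensorProduct.map (HopfAlgebra.antipode (R := k)) LinearMap.id)
      ((TensorProduct.comm k H H) (Coalgebra.comul Λ)))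

/-- The star product `(f ⋆ g)(h) = (f ⊗ g)(Δ(h)Δ(v')(v ⊗ v))`, where `v'` plays
the role of `v⁻¹`. -/
def starP (k H : Type*) [CommRing k] [Ring H] [HopfAlgebra k H] (v v' : H)
    (f g : H →ₗ[k] k) : H →ₗ[k] k :=
  LinearMap.mul' k k ∘ₗ TensorProduct.map f g ∘ₗ
    (LinearMap.mulRight k ((Coalgebra.comul v') * (v ⊗ₜ[k] v)) ∘ₗ Coalgebra.comul)

/-- The character of the left regular representation of a finite-dimensional algebra. -/
def regChar (k A : Type*) [CommRing k] [Ring A] [Algebra k A] : A →ₗ[k] k :=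
  LinearMap.trace k A ∘ₗ LinearMap.mul k A

/-- If `x ≠ 0` and `x ⊗ z = 0` in a tensor product of vector spaces, then `z = 0`. -/
lemma aux_tmul_left_cancel {k M W : Type*} [Field k] [AddCommGroup M] [Module k M]
    [AddCommGroup W] [Module k W] {x : M} (hx : x ≠ 0) {z : W}
    (h : x ⊗ₜ[k] z = 0) : z = 0 := by
  obtain ⟨φ, hφ⟩ : ∃ φ : Module.Dual k M, φ x ≠ 0 := by
    by_contra hc
    push_neg at hc
    exact hx ((Module.forall_dual_apply_eq_zero_iff k x).mp hc)
  have h2 := congrArg (fun t => (TensorProduct.lid k W)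
    (TensorProduct.map φ (LinearMap.id (R := k) (M := W)) t)) h
  simp only [TensorProduct.map_tmul, LinearMap.id_coe, id_eq, TensorProduct.lid_tmul,
    map_zero] at h2
  rcases smul_eq_zero.mp h2 with h3 | h3
  · exact absurd h3 hφ
  · exact h3

/-- Schur's lemma over an algebraically closed field: a `k`-linear endomorphism of a
finite-dimensional simple `H`-module commuting with the `H`-action is a scalar. -/
lemma aux_schur {k : Type*} [Field k] [IsAlgClosed k] {H : Type*} [Ring H]
    {M : Type*} [AddCommGroup M] [Module k M] [Module H M] [SMulCommClass H k M]
    [FiniteDimensional k M] (hM : IsSimpleModule H M)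
    (f : M →ₗ[k] M) (hf : ∀ (h : H) (x : M), f (h • x) = h • f x) :
    ∃ c : k, ∀ x, f x = c • x := by
  haveI := hM
  haveI : Nontrivial M := IsSimpleModule.nontrivial (R := H) (M := M)
  obtain ⟨c, hc⟩ := Module.End.exists_eigenvalue (f : Module.End k M)
  obtain ⟨x₀, hx₀⟩ := hc.exists_hasEigenvector
  refine ⟨c, ?_⟩
  let N : Submodule H M :=
    { carrier := {x | f x = c • x}
      add_mem' := by
        intro a b ha hb
        simp only [Set.mem_setOf_eq] at *
        rw [map_add, ha, hb, smul_add]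
      zero_mem' := by simp
      smul_mem' := by
        intro h x hx
        simp only [Set.mem_setOf_eq] at *
        rw [hf, hx, smul_comm] }
  have hmem : x₀ ∈ N := hx₀.apply_eq_smul
  rcases eq_bot_or_eq_top N with hbot | htop
  · rw [hbot] at hmem
    exact absurd ((Submodule.mem_bot H).mp hmem) hx₀.right
  · intro x
    have : x ∈ N := htop ▸ Submodule.mem_top
    exact this

theorem stmt5
    {k : Type*} [Field k] [IsAlgClosed k] {p : ℕ} [CharP k p] (hp : 0 < p)
    {H : Type*} [Ring H] [HopfAlgebra k H] [FiniteDimensional k H] [IsSemisimpleRing H]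
    (hpdim : Module.finrank k H < p ^ 2) (hpnd : ¬ p ∣ 2 * Module.finrank k H)
    (Λ : H) (hΛ : ∀ h : H, h * Λ = Coalgebra.counit (R := k) h • Λ)
    (lam : H →ₗ[k] k)
    (hlamInt : ∀ h : H, (TensorProduct.lid k H)
      ((TensorProduct.map lam LinearMap.id) (Coalgebra.comul (R := k) h)) = lam h • (1 : H))
    (hlamΛ : lam Λ = 1)
    (u : H) (hu : u = uElt k H Λ)
    {m : ℕ} (V : Fin m → Type*) [∀ i, AddCommGroup (V i)] [∀ i, Module k (V i)]
    [∀ i, Module H (V i)] [∀ i, IsScalarTower k H (V i)] [∀ i, SMulCommClass H k (V i)]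
    [∀ i, FiniteDimensional k (V i)]
    (hVsimple : ∀ i, IsSimpleModule H (V i))
    (hVdistinct : ∀ i j : Fin m, i ≠ j → IsEmpty (V i ≃ₗ[H] V j))
    (hVcomplete : ∀ (N : Type*) [AddCommGroup N] [Module H N],
      IsSimpleModule H N → ∃ i, Nonempty (N ≃ₗ[H] V i))
    (e : Fin m → H) (heOne : ∀ i (x : V i), e i • x = x)
    (heZero : ∀ i j, i ≠ j → ∀ x : V j, e i • x = 0)
    (sε : k) (hsε : sε ^ 2 = Coalgebra.counit (R := k) Λ)
    (slam : Fin m → k) (hslam : ∀ i, slam i ^ 2 = lam (e i))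
    (v : H) (hv : v = sε⁻¹ • (u * ∑ i, (slam i / (Module.finrank k (V i) : k)) • e i))
    (n : ℕ) [NeZero n] (hn : n = 2 * Module.finrank k H)
    {A : Type*} [Ring A] [HopfAlgebra k A]
    (σ : ZMod n → H →ₗ[k] A)
    (hσone : σ 0 1 = 1)
    (hσmul : ∀ (κ ι : ZMod n) (a b : H), σ κ a * σ ι b
      = σ (κ + ι) (a * (⇑(HopfAlgebra.antipode (R := k) (A := H)))^[2 * κ.val] b))
    (hσcomul : ∀ (κ : ZMod n) (h : H),
      Coalgebra.comul (R := k) (σ κ h) = TensorProduct.map (σ κ) (σ κ) (Coalgebra.comul (R := k) h))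
    (hσcounit : ∀ (κ : ZMod n) (h : H),
      Coalgebra.counit (R := k) (σ κ h) = Coalgebra.counit (R := k) h)
    (hσantipode : ∀ (κ : ZMod n) (h : H), HopfAlgebra.antipode (R := k) (σ κ h)
      = σ (-κ) ((⇑(HopfAlgebra.antipode (R := k) (A := H)))^[2 * n + 1 - 2 * κ.val] h))
    (hσspan : ∀ a : A, ∃ c : ZMod n → H, a = ∑ κ : ZMod n, σ κ (c κ))
    (hσindep : ∀ c : ZMod n → H, ∑ κ : ZMod n, σ κ (c κ) = 0 → ∀ κ, c κ = 0)
    (M : Type*) [AddCommGroup M] [Module k M] [Module H M] [IsScalarTower k H M]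
    [SMulCommClass H k M] [FiniteDimensional k M]
    (hMsimple : IsSimpleModule H M)
    (W : Type*) [AddCommGroup W] [Module k W] [FiniteDimensional k W]
    (ρ : Representation k (ZMod n) W)
    (hWnontriv : Nontrivial W)
    (hWsimple : ∀ U : Submodule k W, (∀ (κ : ZMod n), ∀ w ∈ U, ρ κ w ∈ U) → U = ⊥ ∨ U = ⊤)
    [instMW : Module A (M ⊗[k] W)]
    (hact : ∀ (h : H) (κ : ZMod n) (x : M) (w : W),
      σ κ h • (x ⊗ₜ[k] w) = ((h * v ^ κ.val) • x) ⊗ₜ[k] (ρ κ w))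
    :
    IsSimpleModule A (M ⊗[k] W) := by
  classical
  haveI := hMsimple
  haveI : Nontrivial M := IsSimpleModule.nontrivial (R := H) (M := M)
  obtain ⟨x₀, hx₀⟩ := exists_ne (0 : M)
  obtain ⟨w₀, hw₀⟩ := exists_ne (0 : W)
  have hval0 : (0 : ZMod n).val = 0 := ZMod.val_zero
  -- action of σ 0 h on pure tensors
  have hact0 : ∀ (h : H) (x : M) (w : W),
      σ 0 h • (x ⊗ₜ[k] w) = (h • x) ⊗ₜ[k] (ρ 0 w) := by
    intro h x w
    rw [hact, hval0, pow_zero, mul_one]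
  -- ρ 0 is the identity
  have hρ0 : ∀ w : W, ρ 0 w = w := by
    intro w
    have h1 : x₀ ⊗ₜ[k] (ρ 0 w) = x₀ ⊗ₜ[k] w := by
      have := hact0 1 x₀ w
      rw [hσone, one_smul, one_smul] at this
      exact this.symm
    have hsub : x₀ ⊗ₜ[k] (ρ 0 w - w) = 0 := by
      rw [TensorProduct.tmul_sub, h1, sub_self]
    exact sub_eq_zero.mp (aux_tmul_left_cancel hx₀ hsub)
  -- compatibility of the k-action with the A-action
  have hksmul : ∀ (c : k) (t : M ⊗[k] W), (algebraMap k A c) • t = c • t := by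
    intro c t
    induction t using TensorProduct.induction_on with
    | zero => simp
    | tmul x w =>
      have h1 : algebraMap k A c = σ 0 (c • (1 : H)) := by
        rw [map_smul, hσone, Algebra.algebraMap_eq_smul_one]
      rw [h1, hact0, hρ0, smul_assoc, one_smul, TensorProduct.smul_tmul']
    | add t1 t2 h1 h2 => rw [smul_add, smul_add, h1, h2]
  -- antipode fixes 1
  have hanti1 : HopfAlgebra.antipode (R := k) (A := H) 1 = 1 := by
    have h := HopfAlgebra.mul_antipode_rTensor_comul_apply (R := k) (A := H) (1 : H)
    rw [Bialgebra.comul_one, Algebra.TensorProduct.one_def] at h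
    simpa using h
  have hS1 : ∀ j : ℕ, (⇑(HopfAlgebra.antipode (R := k) (A := H)))^[j] (1 : H) = 1 :=
    fun j => Function.iterate_fixed hanti1 j
  -- the H-action on M ⊗ W (through the left factor) agrees with the action of σ 0
  have hsmul_def : ∀ (h : H) (t : M ⊗[k] W), h • t = σ 0 h • t := by
    intro h t
    induction t using TensorProduct.induction_on with
    | zero => simp
    | tmul x w => rw [TensorProduct.smul_tmul', hact0, hρ0]
    | add t1 t2 h1 h2 => rw [smul_add, h1, h2, ← smul_add]
  haveI : IsSemisimpleModule H (M ⊗[k] W) := IsSemisimpleRing.isSemisimpleModule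
  -- units σ κ 1
  have hunit : ∀ κ ι : ZMod n, σ κ 1 * σ ι 1 = σ (κ + ι) 1 := by
    intro κ ι
    rw [hσmul, hS1, mul_one]
  have hTsurj : ∀ (κ : ZMod n) (t : M ⊗[k] W), ∃ z, σ κ 1 • z = t := by
    intro κ t
    refine ⟨σ (-κ) 1 • t, ?_⟩
    rw [← mul_smul, hunit, add_neg_cancel, hσone, one_smul]
  -- nontriviality of M ⊗ W
  have hnt : Nontrivial (M ⊗[k] W) :=
    ⟨x₀ ⊗ₜ[k] w₀, 0, fun hcon => hw₀ (aux_tmul_left_cancel hx₀ hcon)⟩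
  -- a fixed dual functional on W
  obtain ⟨φ, hφ⟩ : ∃ φ : Module.Dual k W, φ w₀ = 1 := by
    obtain ⟨φ, hφ⟩ : ∃ φ : Module.Dual k W, φ w₀ ≠ 0 := by
      by_contra hcon
      push_neg at hcon
      exact hw₀ ((Module.forall_dual_apply_eq_zero_iff k w₀).mp hcon)
    exact ⟨(φ w₀)⁻¹ • φ, by simp [inv_mul_cancel₀ hφ]⟩
  let P : M ⊗[k] W →ₗ[k] M :=
    (TensorProduct.rid k M).toLinearMap ∘ₗ TensorProduct.map LinearMap.id φ
  have hP : ∀ (x : M) (w : W), P (x ⊗ₜ[k] w) = φ w • x := by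
    intro x w
    show (TensorProduct.rid k M) (TensorProduct.map LinearMap.id φ (x ⊗ₜ[k] w)) = φ w • x
    simp
  -- surjectivity of x ↦ v ^ κ.val • x
  have hLsurj : ∀ (κ : ZMod n) (y : M), ∃ x, v ^ (κ.val) • x = y := by
    intro κ y
    obtain ⟨z, hzeq⟩ := hTsurj κ (y ⊗ₜ[k] w₀)
    have key : ∀ z : M ⊗[k] W, ∃ x, v ^ κ.val • x = P (σ κ 1 • z) := by
      intro z
      induction z using TensorProduct.induction_on with
      | zero => exact ⟨0, by rw [smul_zero, smul_zero, map_zero]⟩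
      | tmul a w =>
        refine ⟨φ (ρ κ w) • a, ?_⟩
        rw [hact 1 κ, one_mul, hP]
        exact smul_comm _ _ _
      | add z1 z2 h1 h2 =>
        obtain ⟨a1, ha1⟩ := h1
        obtain ⟨a2, ha2⟩ := h2
        exact ⟨a1 + a2, by rw [smul_add, ha1, ha2, ← map_add, ← smul_add]⟩
    obtain ⟨x, hx⟩ := key z
    exact ⟨x, by rw [hx, hzeq, hP, hφ, one_smul]⟩
  -- basis of W and projections
  let d := Module.finrank k W
  let b : Module.Basis (Fin d) k W := Module.finBasis k W
  let π : Fin d → (M ⊗[k] W →ₗ[k] M) := fun i =>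
    (TensorProduct.rid k M).toLinearMap ∘ₗ TensorProduct.map LinearMap.id (b.coord i)
  have hπ_tmul : ∀ (i : Fin d) (x : M) (w : W), π i (x ⊗ₜ[k] w) = b.coord i w • x := by
    intro i x w
    show (TensorProduct.rid k M) (TensorProduct.map LinearMap.id (b.coord i) (x ⊗ₜ[k] w)) = _
    simp
  have hexpand : ∀ t : M ⊗[k] W, ∑ i, (π i t) ⊗ₜ[k] b i = t := by
    intro t
    induction t using TensorProduct.induction_on with
    | zero => simp
    | tmul x w =>
      simp_rw [hπ_tmul, TensorProduct.smul_tmul]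
      rw [← TensorProduct.tmul_sum]
      congr 1
      simpa using b.sum_repr w
    | add t1 t2 h1 h2 =>
      simp only [map_add, TensorProduct.add_tmul]
      rw [Finset.sum_add_distrib, h1, h2]
  have hπ_equiv : ∀ (i : Fin d) (h : H) (t : M ⊗[k] W),
      π i (σ 0 h • t) = h • π i t := by
    intro i h t
    induction t using TensorProduct.induction_on with
    | zero => simp
    | tmul x w =>
      rw [hact0, hρ0, hπ_tmul, hπ_tmul]
      exact (smul_comm h (b.coord i w) x).symm
    | add t1 t2 h1 h2 => rw [smul_add, map_add, map_add, h1, h2, smul_add]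
  -- main argument
  refine { toNontrivial := ?_, eq_bot_or_eq_top := ?_ }
  · refine ⟨⊥, ⊤, fun hcon => ?_⟩
    obtain ⟨t, ht⟩ := exists_ne (0 : M ⊗[k] W)
    have : t ∈ (⊥ : Submodule A (M ⊗[k] W)) := hcon ▸ Submodule.mem_top
    exact ht ((Submodule.mem_bot A).mp this)
  intro U
  by_cases hU : U = ⊥
  · exact Or.inl hU
  refine Or.inr ?_
  obtain ⟨t₀, ht₀U, ht₀⟩ := (Submodule.ne_bot_iff U).mp hU
  -- U as H-submodule
  let UH : Submodule H (M ⊗[k] W) :=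
    { carrier := (U : Set (M ⊗[k] W))
      add_mem' := fun ha hb => U.add_mem ha hb
      zero_mem' := U.zero_mem
      smul_mem' := fun h {t} ht => by
        show h • t ∈ (U : Set (M ⊗[k] W))
        rw [hsmul_def]
        exact U.smul_mem (σ 0 h) ht }
  rcases IsSemisimpleModule.eq_bot_or_exists_simple_le UH with hbot | ⟨mm, hmle, hmsimple⟩
  · exfalso
    have : t₀ ∈ UH := ht₀U
    rw [hbot] at this
    exact ht₀ ((Submodule.mem_bot H).mp this)
  haveI := hmsimple
  haveI : Nontrivial ↥mm := IsSimpleModule.nontrivial (R := H) (M := ↥mm)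
  obtain ⟨z, hz0⟩ := exists_ne (0 : ↥mm)
  have hzM : (z : M ⊗[k] W) ≠ 0 := fun hcon => hz0 (Subtype.ext hcon)
  obtain ⟨i₀, hi₀⟩ : ∃ i, π i (z : M ⊗[k] W) ≠ 0 := by
    by_contra hc
    push_neg at hc
    apply hzM
    rw [← hexpand (z : M ⊗[k] W)]
    simp [hc]
  -- an H-linear isomorphism mm ≃ M
  let gH : ↥mm →ₗ[H] M :=
    { toFun := fun x => π i₀ (x : M ⊗[k] W)
      map_add' := fun a b => by
        show π i₀ ↑(a + b) = π i₀ ↑a + π i₀ ↑b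
        rw [Submodule.coe_add, map_add]
      map_smul' := fun h x => by
        show π i₀ ↑(h • x) = h • π i₀ ↑x
        rw [Submodule.coe_smul, hsmul_def, hπ_equiv] }
  have hgH : gH ≠ 0 := by
    intro hcon
    apply hi₀
    have : gH z = 0 := by rw [hcon]; rfl
    exact this
  have hbij := LinearMap.bijective_of_ne_zero hgH
  let eiso : ↥mm ≃ₗ[H] M := LinearEquiv.ofBijective gH hbij
  let F : M →ₗ[H] M ⊗[k] W := (Submodule.subtype mm) ∘ₗ eiso.symm.toLinearMap
  have hFU : ∀ x : M, F x ∈ U := fun x => hmle (eiso.symm x).2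
  have hFsmul : ∀ (h : H) (x : M), F (h • x) = σ 0 h • F x := by
    intro h x
    have h2 := F.map_smul h x
    rw [hsmul_def] at h2
    exact h2
  -- the components of F are scalars
  have hc : ∀ i : Fin d, ∃ c : k, ∀ x, π i (F x) = c • x := by
    intro i
    have hk1 : ∀ (c : k) (x : M), F (c • x) = c • F x := by
      intro c x
      have h1 : (c • (1 : H)) • x = c • x := by rw [smul_assoc, one_smul]
      rw [← h1, hFsmul, map_smul, hσone, ← Algebra.algebraMap_eq_smul_one, hksmul]
    let f : M →ₗ[k] M :=
      { toFun := fun x => π i (F x)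
        map_add' := fun a b => by
          show π i (F (a + b)) = π i (F a) + π i (F b)
          rw [map_add, map_add]
        map_smul' := fun cc x => by
          show π i (F (cc • x)) = cc • π i (F x)
          rw [hk1, map_smul] }
    have hf : ∀ (h : H) (x : M), f (h • x) = h • f x := by
      intro h x
      show π i (F (h • x)) = h • π i (F x)
      rw [hFsmul, hπ_equiv]
    exact aux_schur hMsimple f hf
  choose c hcspec using hc
  have hFx : ∀ x : M, F x = x ⊗ₜ[k] (∑ i, c i • b i) := by
    intro x
    conv_lhs => rw [← hexpand (F x)]
    simp_rw [hcspec, TensorProduct.smul_tmul]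
    rw [← TensorProduct.tmul_sum]
  set w₁ : W := ∑ i, c i • b i with hw₁def
  have hw₁ : w₁ ≠ 0 := by
    intro h0
    apply hzM
    have h1 : (z : M ⊗[k] W) = F (eiso z) := by
      show _ = ((eiso.symm (eiso z) : ↥mm) : M ⊗[k] W)
      rw [LinearEquiv.symm_apply_apply]
    rw [h1, hFx, h0, TensorProduct.tmul_zero]
  have hpure : ∀ x : M, x ⊗ₜ[k] w₁ ∈ U := fun x => by
    rw [← hFx]; exact hFU x
  -- the subspace of w with M ⊗ w ⊆ U
  let W1 : Submodule k W :=
    { carrier := {w | ∀ x : M, x ⊗ₜ[k] w ∈ U}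
      add_mem' := by
        intro a b ha hb x
        rw [TensorProduct.tmul_add]
        exact U.add_mem (ha x) (hb x)
      zero_mem' := by
        intro x
        rw [TensorProduct.tmul_zero]
        exact U.zero_mem
      smul_mem' := by
        intro cc w hw x
        rw [TensorProduct.tmul_smul, ← hksmul]
        exact U.smul_mem _ (hw x) }
  have hW1inv : ∀ (κ : ZMod n), ∀ w ∈ W1, ρ κ w ∈ W1 := by
    intro κ w hw x
    obtain ⟨x', hx'⟩ := hLsurj κ x
    have h1 : σ κ 1 • (x' ⊗ₜ[k] w) = x ⊗ₜ[k] (ρ κ w) := by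
      rw [hact, one_mul, hx']
    rw [← h1]
    exact U.smul_mem _ (hw x')
  have hW1top : W1 = ⊤ := by
    rcases hWsimple W1 hW1inv with hbot | htop
    · exfalso
      have hmem : w₁ ∈ W1 := hpure
      rw [hbot] at hmem
      exact hw₁ ((Submodule.mem_bot k).mp hmem)
    · exact htop
  rw [Submodule.eq_top_iff']
  intro t
  induction t using TensorProduct.induction_on with
  | zero => exact U.zero_mem
  | tmul x w =>
    have hmem : w ∈ W1 := hW1top ▸ Submodule.mem_top
    exact hmem x
  | add t1 t2 h1 h2 => exact U.add_mem h1 h2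

end
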